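/- The reduction-mod-H homomorphism φ: G_{k+l}(G,H) → G_{k+l}(G/H,1) induces a bijection between the coset spaces G_{k+l}(G,H)/(G_k(G,H) × G_l(G,H)) and G_{k+l}(G/H,1)/(G_k(G/H,1) × G_l(G/H,1)). -/

import Mathlib

open SemidirectProduct

/-- The action of permutations of `ι` on `ι → G` by permuting coordinates. -/
def permAut (ι G : Type*) [Group G] : Equiv.Perm ι →* MulAut (ι → G) where
  toFun σ := { Equiv.arrowCongr σ (Equiv.refl G) with
               map_mul' := fun f g => rfl }
  map_one' := by ext f i; rfl
  map_mul' σ τ := by ext f i; rfl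

/-- The wreath product `S_ι[G]`, a model for the group of monomial matrices
with rows/columns indexed by `ι` and nonzero entries in `G`. -/
abbrev Wreath (ι G : Type*) [Group G] := (ι → G) ⋊[permAut ι G] Equiv.Perm ι

@[simp] lemma permAut_apply {ι G : Type*} [Group G] (σ : Equiv.Perm ι) (f : ι → G) (i : ι) :
    permAut ι G σ f i = f (σ.symm i) := rfl

/-- The product of the nonzero entries of a monomial matrix. -/
def entryProdFun {ι G : Type*} [Fintype ι] [CommGroup G] (w : Wreath ι G) : G :=
  ∏ i, w.left i

/-- The entry-product map as a monoid hom. -/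
def entryProd (ι G : Type*) [Fintype ι] [CommGroup G] : Wreath ι G →* G where
  toFun := entryProdFun
  map_one' := by simp [entryProdFun]
  map_mul' a b := by
    simp only [entryProdFun, mul_left, Pi.mul_apply, Finset.prod_mul_distrib]
    congr 1
    exact Equiv.prod_comp a.right.symm fun i => b.left i

/-- `G_n(G, H)`: the subgroup of the wreath product consisting of monomial
matrices whose entries multiply to an element of `H`. -/
def GnSubgroup (n : ℕ) (G : Type*) [CommGroup G] (H : Subgroup G) :
    Subgroup (Wreath (Fin n) G) :=
  Subgroup.comap (entryProd (Fin n) G) H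

lemma mem_GnSubgroup {n : ℕ} {G : Type*} [CommGroup G] {H : Subgroup G}
    (w : Wreath (Fin n) G) : w ∈ GnSubgroup n G H ↔ (∏ i, w.left i) ∈ H := Iff.rfl

/-- The diagonal embedding of `H^n` into the wreath product. -/
def diagW {n : ℕ} {G : Type*} [CommGroup G] (H : Subgroup G) :
    (Fin n → ↥H) →* Wreath (Fin n) G :=
  SemidirectProduct.inl.comp
    (Pi.monoidHom fun i => H.subtype.comp (Pi.evalMonoidHom (fun _ => ↥H) i))

@[simp] lemma diagW_left {n : ℕ} {G : Type*} [CommGroup G] {H : Subgroup G}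
    (h : Fin n → ↥H) (i : Fin n) : (diagW H h).left i = (h i : G) := rfl

@[simp] lemma diagW_right {n : ℕ} {G : Type*} [CommGroup G] {H : Subgroup G}
    (h : Fin n → ↥H) : (diagW H h).right = 1 := rfl

lemma diagW_mem {n : ℕ} {G : Type*} [CommGroup G] (H : Subgroup G) (h : Fin n → ↥H) :
    diagW H h ∈ GnSubgroup n G H := by
  simp only [mem_GnSubgroup, diagW_left]
  exact_mod_cast (Submonoid.prod_mem H.toSubmonoid (fun i _ => (h i).2))

/-- The diagonal embedding of `H^n` into `G_n(G,H)`. -/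
def diagGn {n : ℕ} {G : Type*} [CommGroup G] (H : Subgroup G) :
    (Fin n → ↥H) →* ↥(GnSubgroup n G H) :=
  (diagW H).codRestrict _ (diagW_mem H)

/-- Entrywise reduction mod `H`, as a map of wreath products. -/
def reduceW (n : ℕ) (G : Type*) [CommGroup G] (H : Subgroup G) :
    Wreath (Fin n) G →* Wreath (Fin n) (G ⧸ H) :=
  SemidirectProduct.map
    (Pi.monoidHom fun i => (QuotientGroup.mk' H).comp (Pi.evalMonoidHom (fun _ => G) i))
    (MonoidHom.id _)
    (fun σ => by ext f i; rfl)

lemma reduceW_mem {n : ℕ} {G : Type*} [CommGroup G] (H : Subgroup G)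
    (w : ↥(GnSubgroup n G H)) : reduceW n G H w.1 ∈ GnSubgroup n (G ⧸ H) ⊥ := by
  have hw := w.2
  simp only [mem_GnSubgroup] at hw ⊢
  have : (∏ i, (reduceW n G H w.1).left i) = QuotientGroup.mk' H (∏ i, w.1.left i) := by
    rw [map_prod]; rfl
  rw [this, Subgroup.mem_bot]
  rw [QuotientGroup.mk'_apply, QuotientGroup.eq_one_iff]
  exact hw

/-- The reduction-mod-`H` homomorphism `φ : G_n(G,H) → G_n(G/H, 1)`. -/
def phiGn (n : ℕ) (G : Type*) [CommGroup G] (H : Subgroup G) :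
    ↥(GnSubgroup n G H) →* ↥(GnSubgroup n (G ⧸ H) ⊥) :=
  ((reduceW n G H).comp (GnSubgroup n G H).subtype).codRestrict _ (reduceW_mem H)

/-- The character `l^{⊗n}` of `H^n` associated to a character `l` of `H`. -/
def tensorChar {n : ℕ} {G : Type*} [CommGroup G] {H : Subgroup G}
    (l : ↥H →* ℂˣ) : (Fin n → ↥H) →* ℂˣ :=
  { toFun := fun h => ∏ i, l (h i)
    map_one' := by simp
    map_mul' := fun h h' => by simp [Finset.prod_mul_distrib] }

/-- The `l^{⊗n}`-isotypic component of the restriction to the diagonal `H^n` of a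
representation `ρ` of `G_n(G,H)`: the simultaneous eigenspace on which each
`diagGn H h` acts by the scalar `l^{⊗n}(h)`. -/
def isotypic {n : ℕ} {G : Type*} [CommGroup G] {H : Subgroup G}
    (l : ↥H →* ℂˣ) {V : Type*} [AddCommGroup V] [Module ℂ V]
    (ρ : Representation ℂ ↥(GnSubgroup n G H) V) : Submodule ℂ V :=
  ⨅ h : Fin n → ↥H, Module.End.eigenspace (ρ (diagGn H h)) ((tensorChar l h : ℂˣ) : ℂ)

/-- Irreducibility of a representation. -/
def IsIrred {k : Type*} [Field k] {Γ : Type*} [Group Γ] {V : Type*}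
    [AddCommGroup V] [Module k V] (ρ : Representation k Γ V) : Prop :=
  (∃ v : V, v ≠ 0) ∧
  ∀ W : Submodule k V, (∀ g : Γ, ∀ v ∈ W, ρ g v ∈ W) → W = ⊥ ∨ W = ⊤

/-- Equivalence (isomorphism) of representations. -/
def EquivRep {k : Type*} [Field k] {Γ : Type*} [Group Γ]
    {V V' : Type*} [AddCommGroup V] [Module k V] [AddCommGroup V'] [Module k V']
    (ρ : Representation k Γ V) (σ : Representation k Γ V') : Prop :=
  ∃ e : V ≃ₗ[k] V', ∀ (g : Γ) (v : V), e (ρ g v) = σ g (e v)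

/-- Twisting a representation by a one-dimensional character. -/
def smulRep {Γ : Type*} [Group Γ] {V : Type*} [AddCommGroup V] [Module ℂ V]
    (χ : Γ →* ℂˣ) (ρ : Representation ℂ Γ V) : Representation ℂ Γ V where
  toFun g := ((χ g : ℂ)) • ρ g
  map_one' := by simp
  map_mul' g g' := by
    ext v
    simp only [map_mul, LinearMap.smul_apply, Module.End.mul_apply, Units.val_mul,
      LinearMap.map_smul_of_tower, smul_smul, mul_comm]


/-- The complex reflection group `G(m,p,n)`: monomial matrices whose nonzero
entries are `m`-th roots of unity and whose entry product is an `m/p`-th root of unity. -/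
def Gmpn (m p n : ℕ) : Subgroup (Wreath (Fin n) ℂˣ) where
  carrier := {w | (∀ i, w.left i ^ m = 1) ∧ (∏ i, w.left i) ^ (m / p) = 1}
  one_mem' := by simp
  mul_mem' := by
    rintro a b ⟨ha1, ha2⟩ ⟨hb1, hb2⟩
    constructor
    · intro i
      simp only [mul_left, Pi.mul_apply, permAut_apply, mul_pow, ha1, hb1, one_mul]
    · have : (∏ i, (a * b).left i) = (∏ i, a.left i) * ∏ i, b.left i :=
        map_mul (entryProd (Fin n) ℂˣ) a b
      rw [this, mul_pow, ha2, hb2, one_mul]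
  inv_mem' := by
    rintro a ⟨ha1, ha2⟩
    constructor
    · intro i
      have : a⁻¹.left i = (a.left (a.right i))⁻¹ := by
        rw [SemidirectProduct.inv_left]; rfl
      rw [this, inv_pow, ha1, inv_one]
    · have : (∏ i, a⁻¹.left i) = (∏ i, a.left i)⁻¹ := map_inv (entryProd (Fin n) ℂˣ) a
      rw [this, inv_pow, ha2, inv_one]


lemma permCongr_perm_symm {α β : Type*} (e : α ≃ β) (p : Equiv.Perm α) :
    (e.permCongr p).symm = e.permCongr p.symm := by
  ext x; simp [Equiv.permCongr_def]

/-- The block-diagonal placement of a pair of monomial matrices. -/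
def blockDiagFun {G : Type*} [Group G] {k l : ℕ}
    (a : Wreath (Fin k) G) (b : Wreath (Fin l) G) : Wreath (Fin (k + l)) G :=
  ⟨fun i => Sum.elim a.left b.left (finSumFinEquiv.symm i),
   finSumFinEquiv.permCongr (Equiv.sumCongr a.right b.right)⟩

/-- The block-diagonal embedding as a group homomorphism on full wreath products. -/
def blockDiagHom (G : Type*) [Group G] (k l : ℕ) :
    Wreath (Fin k) G × Wreath (Fin l) G →* Wreath (Fin (k + l)) G where
  toFun p := blockDiagFun p.1 p.2
  map_one' := by
    apply SemidirectProduct.ext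
    · funext i
      rcases h : finSumFinEquiv.symm i with x | x <;>
        simp [blockDiagFun, h]
    · ext i
      simp [blockDiagFun, Equiv.permCongr]
  map_mul' p q := by
    apply SemidirectProduct.ext
    · funext i
      rcases h : finSumFinEquiv.symm i with x | x <;>
        simp [blockDiagFun, h, mul_left, permAut_apply, permCongr_perm_symm,
          Equiv.permCongr_apply, Equiv.symm_apply_apply, Equiv.sumCongr_symm,
          Equiv.sumCongr_apply, Sum.map]
    · ext i
      rcases h : finSumFinEquiv.symm i with x | x <;>
        simp [blockDiagFun, h, mul_right, Equiv.permCongr_apply, Equiv.symm_apply_apply,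
          Equiv.sumCongr_apply, Sum.map, permCongr_perm_symm]


open scoped Classical in
/-- The block subgroup `G_λ = ∏_j G_{λ_j}(G,H)` of block-diagonal monomial matrices,
where the blocks are the fibers of `bl : Fin n → ι` (so `λ_j` is the size of the
fiber over `j`): permutations must preserve each block, and the product of the
entries in each block must lie in `H`. -/
def blockSubgroupH {n : ℕ} {G : Type*} [CommGroup G] (H : Subgroup G)
    {ι : Type*} (bl : Fin n → ι) : Subgroup (Wreath (Fin n) G) where
  carrier := {w | (∀ i, bl (w.right i) = bl i) ∧
    ∀ j : ι, (∏ i, if bl i = j then w.left i else 1) ∈ H}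
  one_mem' := by
    refine ⟨fun i => rfl, fun j => ?_⟩
    simpa using H.one_mem
  mul_mem' := by
    rintro a b ⟨ha1, ha2⟩ ⟨hb1, hb2⟩
    have hperm : ∀ i, bl (a.right i) = bl i := ha1
    refine ⟨fun i => ?_, fun j => ?_⟩
    · have : (a * b).right i = a.right (b.right i) := rfl
      rw [this, ha1, hb1]
    · have hsplit : (∏ i, if bl i = j then (a * b).left i else 1)
          = (∏ i, if bl i = j then a.left i else 1) *
            ∏ i, if bl i = j then b.left (a.right.symm i) else 1 := by
        rw [← Finset.prod_mul_distrib]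
        refine Finset.prod_congr rfl fun i _ => ?_
        by_cases h : bl i = j <;>
          simp [h, mul_left, permAut_apply]
      have hre : (∏ i, if bl i = j then b.left (a.right.symm i) else 1)
          = ∏ i, if bl i = j then b.left i else 1 := by
        refine Fintype.prod_equiv a.right.symm _ _ fun i => ?_
        have : bl (a.right.symm i) = bl i := by
          conv_rhs => rw [← a.right.apply_symm_apply i, ha1]
        rw [this]
      rw [hsplit, hre]
      exact H.mul_mem (ha2 j) (hb2 j)
  inv_mem' := by
    rintro a ⟨ha1, ha2⟩
    have hsymm : ∀ i, bl (a.right.symm i) = bl i := fun i => by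
      conv_rhs => rw [← a.right.apply_symm_apply i, ha1]
    refine ⟨fun i => ?_, fun j => ?_⟩
    · have : a⁻¹.right i = a.right.symm i := rfl
      rw [this, hsymm]
    · have hinv : ∀ i, a⁻¹.left i = (a.left (a.right i))⁻¹ := fun i => by
        rw [SemidirectProduct.inv_left]; rfl
      have : (∏ i, if bl i = j then a⁻¹.left i else 1)
          = (∏ i, if bl i = j then a.left i else 1)⁻¹ := by
        rw [← Finset.prod_inv_distrib]
        refine (Fintype.prod_equiv a.right _ _ fun i => ?_)
        rw [hinv]
        by_cases h : bl i = j
        · rw [if_pos h, if_pos (by rw [ha1, h])]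
        · rw [if_neg h, if_neg (by rw [ha1]; exact h), inv_one]
      rw [this]
      exact H.inv_mem (ha2 j)


open scoped TensorProduct

section Block19

variable {n k : ℕ} {G : Type*} [CommGroup G] (c : Fin n → Fin k)

lemma blockSubgroupH_right_eq {H : Subgroup G} {ι : Type*} {bl : Fin n → ι}
    (w : ↥(blockSubgroupH H bl)) (i : Fin n) : bl (w.1.right i) = bl i := w.2.1 i

/-- The permutation of the block `c⁻¹(j)` induced by a block-preserving element. -/
def blockPerm (w : ↥(blockSubgroupH (⊤ : Subgroup G) c)) (j : Fin k) :
    Equiv.Perm {i : Fin n // c i = j} :=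
  w.1.right.subtypePerm (fun i => by rw [blockSubgroupH_right_eq w i])

/-- The representation `⊠_j Φ_{l_j}(π_j)` of the block subgroup `∏_j S_{λ_j}[G]`:
the external tensor product over the blocks `j` of the pullback of `π_j` along the
projection to the symmetric group of the block, twisted by the character `l_j`
applied to the entries in block `j`. -/
noncomputable def blockRep (l : Fin k → (G →* ℂˣ)) (V : Fin k → Type*)
    [∀ j, AddCommGroup (V j)] [∀ j, Module ℂ (V j)]
    (π : ∀ j, Representation ℂ (Equiv.Perm {i : Fin n // c i = j}) (V j)) :
    Representation ℂ ↥(blockSubgroupH (⊤ : Subgroup G) c) (⨂[ℂ] j, V j) where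
  toFun w := (∏ i, (l (c i) (w.1.left i) : ℂ)) •
    PiTensorProduct.map (fun j => π j (blockPerm c w j))
  map_one' := by
    have h1 : ∀ j, blockPerm c (1 : ↥(blockSubgroupH (⊤ : Subgroup G) c)) j = 1 :=
      fun j => Equiv.Perm.subtypePerm_one _ _
    simp only [h1]
    simp [PiTensorProduct.map_one]
  map_mul' w w' := by
    have hb : ∀ j, blockPerm c (w * w') j = blockPerm c w j * blockPerm c w' j := by
      intro j
      ext x
      rfl
    have hmap : PiTensorProduct.map (fun j => π j (blockPerm c (w * w') j))
        = (PiTensorProduct.map fun j => π j (blockPerm c w j)) ∘ₗ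
          (PiTensorProduct.map fun j => π j (blockPerm c w' j)) := by
      rw [← PiTensorProduct.map_comp]
      congr 1
      funext j
      rw [hb j, map_mul]
      rfl
    have hscal : (∏ i, (l (c i) ((w * w').1.left i) : ℂ))
        = (∏ i, (l (c i) (w.1.left i) : ℂ)) * ∏ i, (l (c i) (w'.1.left i) : ℂ) := by
      have : ∀ i, (w * w').1.left i = w.1.left i * w'.1.left (w.1.right.symm i) := by
        intro i; rfl
      simp only [this, map_mul, Units.val_mul, Finset.prod_mul_distrib]
      congr 1
      refine Fintype.prod_equiv w.1.right.symm _ _ fun i => ?_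
      have : c (w.1.right.symm i) = c i := by
        conv_rhs => rw [← w.1.right.apply_symm_apply i, blockSubgroupH_right_eq w]
      rw [this]
    rw [hmap, hscal, Module.End.mul_eq_comp, LinearMap.smul_comp, LinearMap.comp_smul,
      smul_smul]

end Block19

/-- The space of the representation induced from a representation `ρ` of a
subgroup `K` of `Γ`: functions `f : Γ → V` with `f (k * g) = ρ k (f g)`. -/
def IndV {Γ : Type*} [Group Γ] (K : Subgroup Γ) {V : Type*} [AddCommGroup V]
    [Module ℂ V] (ρ : Representation ℂ ↥K V) : Submodule ℂ (Γ → V) where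
  carrier := {f | ∀ (x : ↥K) (g : Γ), f (↑x * g) = ρ x (f g)}
  zero_mem' := by intro x g; simp
  add_mem' := by intro f f' hf hf' x g; simp [hf x g, hf' x g]
  smul_mem' := by intro a f hf x g; simp [hf x g]

/-- The representation of `Γ` induced from the representation `ρ` of the
subgroup `K`, with `Γ` acting by right translation. -/
def IndRep {Γ : Type*} [Group Γ] (K : Subgroup Γ) {V : Type*} [AddCommGroup V]
    [Module ℂ V] (ρ : Representation ℂ ↥K V) : Representation ℂ Γ ↥(IndV K ρ) where
  toFun g :=
    { toFun := fun f => ⟨fun x => f.1 (x * g), fun y x => by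
        simpa [mul_assoc] using f.2 y (x * g)⟩
      map_add' := fun f f' => by ext x; rfl
      map_smul' := fun a f => by ext x; rfl }
  map_one' := by ext f x; simp
  map_mul' g g' := by
    ext f x
    show f.1 (x * (g * g')) = f.1 (x * g * g')
    rw [mul_assoc]

/-- Transport of permutations along an equivalence, as a group homomorphism. -/
def permCongrHom {α β : Type*} (e : α ≃ β) : Equiv.Perm α →* Equiv.Perm β where
  toFun := e.permCongr
  map_one' := by ext x; simp
  map_mul' p q := by ext x; simp


/-- The image of `G_k(G,H) × G_l(G,H)` in `S_{k+l}[G]` under the block-diagonal embedding. -/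
def blockGnRange (k l : ℕ) (G : Type) [CommGroup G] (H : Subgroup G) :
    Subgroup (Wreath (Fin (k + l)) G) :=
  ((blockDiagHom G k l).comp
    (((GnSubgroup k G H).subtype).prodMap ((GnSubgroup l G H).subtype))).range

namespace S7Aux

variable {k l : ℕ}

/-- Block-indicator function: `true` on the first `k` indices. -/
def bl (k l : ℕ) : Fin (k + l) → Bool := fun i => decide ((i : ℕ) < k)

lemma bl_castAdd (x : Fin k) : bl k l (Fin.castAdd l x) = true := by
  simp [bl, Fin.castAdd, x.2]

lemma bl_natAdd (x : Fin l) : bl k l (Fin.natAdd k x) = false := by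
  simp [bl, Fin.natAdd]

lemma prod_ite_classical {M : Type} [CommMonoid M] {n : ℕ} (b : Fin n → Bool) (j : Bool)
    (f : Fin n → M) :
    (∏ i, @ite M (b i = j) (Classical.propDecidable _) (f i) 1)
      = ∏ i, if b i = j then f i else 1 := by
  refine Finset.prod_congr rfl fun i _ => ?_
  have h : Classical.propDecidable (b i = j) = instDecidableEqBool (b i) j :=
    Subsingleton.elim _ _
  rw [h]

lemma prod_if_split {G : Type} [CommMonoid G] (f : Fin (k + l) → G) :
    (∏ i, if bl k l i = true then f i else 1) = ∏ x : Fin k, f (Fin.castAdd l x) := by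
  rw [Fin.prod_univ_add (f := fun i => if bl k l i = true then f i else 1)]
  have h1 : ∀ x : Fin k, (if bl k l (Fin.castAdd l x) = true then f (Fin.castAdd l x) else 1)
      = f (Fin.castAdd l x) := fun x => by rw [bl_castAdd, if_pos rfl]
  have h2 : ∀ x : Fin l, (if bl k l (Fin.natAdd k x) = true then f (Fin.natAdd k x) else 1)
      = 1 := fun x => by rw [bl_natAdd]; simp
  simp only [h1, h2, Finset.prod_const_one, mul_one]

lemma prod_if_split' {G : Type} [CommMonoid G] (f : Fin (k + l) → G) :
    (∏ i, if bl k l i = false then f i else 1) = ∏ x : Fin l, f (Fin.natAdd k x) := by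
  rw [Fin.prod_univ_add (f := fun i => if bl k l i = false then f i else 1)]
  have h1 : ∀ x : Fin k, (if bl k l (Fin.castAdd l x) = false then f (Fin.castAdd l x) else 1)
      = 1 := fun x => by rw [bl_castAdd]; simp
  have h2 : ∀ x : Fin l, (if bl k l (Fin.natAdd k x) = false then f (Fin.natAdd k x) else 1)
      = f (Fin.natAdd k x) := fun x => by rw [bl_natAdd, if_pos rfl]
  simp only [h1, h2, Finset.prod_const_one, one_mul]

/-- The equivalence between `Fin k` and the first block. -/
def eK (k l : ℕ) : Fin k ≃ {i : Fin (k + l) // bl k l i = true} where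
  toFun x := ⟨Fin.castAdd l x, bl_castAdd x⟩
  invFun y := ⟨(y.1 : ℕ), by have := y.2; simpa [bl] using this⟩
  left_inv x := by ext; rfl
  right_inv y := by ext; rfl

/-- The equivalence between `Fin l` and the second block. -/
def eL (k l : ℕ) : Fin l ≃ {i : Fin (k + l) // bl k l i = false} where
  toFun x := ⟨Fin.natAdd k x, bl_natAdd x⟩
  invFun y := ⟨(y.1 : ℕ) - k, by
    have h2 := y.2
    have hk : ¬ ((y.1 : ℕ) < k) := by simpa [bl] using h2
    have := y.1.2
    omega⟩
  left_inv x := by ext; simp [Fin.natAdd]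
  right_inv y := by
    have h2 := y.2
    have hk : ¬ ((y.1 : ℕ) < k) := by simpa [bl] using h2
    ext
    simp only [Fin.natAdd]
    omega

lemma blockGnRange_eq (k l : ℕ) (G : Type) [CommGroup G] (H : Subgroup G) :
    blockGnRange k l G H = blockSubgroupH H (bl k l) := by
  ext w
  constructor
  · rintro ⟨⟨a, b⟩, rfl⟩
    set A := (a : Wreath (Fin k) G) with hA
    set B := (b : Wreath (Fin l) G) with hB
    constructor
    · intro i
      show bl k l (finSumFinEquiv ((Equiv.sumCongr A.right B.right) (finSumFinEquiv.symm i)))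
          = bl k l i
      rcases h : finSumFinEquiv.symm i with x | x
      · have hi : i = Fin.castAdd l x := by
          have := congrArg finSumFinEquiv h
          simpa using this
        rw [hi]
        show bl k l (Fin.castAdd l (A.right x)) = bl k l (Fin.castAdd l x)
        rw [bl_castAdd, bl_castAdd]
      · have hi : i = Fin.natAdd k x := by
          have := congrArg finSumFinEquiv h
          simpa using this
        rw [hi]
        show bl k l (Fin.natAdd k (B.right x)) = bl k l (Fin.natAdd k x)
        rw [bl_natAdd, bl_natAdd]
    · intro j
      show (∏ i, @ite G (bl k l i = j) (Classical.propDecidable _)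
          ((blockDiagFun A B).left i) 1) ∈ H
      rw [prod_ite_classical]
      have hL : ∀ x : Fin k, (blockDiagFun A B).left (Fin.castAdd l x) = A.left x := by
        intro x
        show Sum.elim A.left B.left (finSumFinEquiv.symm (Fin.castAdd l x)) = A.left x
        rw [finSumFinEquiv_symm_apply_castAdd]
        rfl
      have hR : ∀ x : Fin l, (blockDiagFun A B).left (Fin.natAdd k x) = B.left x := by
        intro x
        show Sum.elim A.left B.left (finSumFinEquiv.symm (Fin.natAdd k x)) = B.left x
        rw [finSumFinEquiv_symm_apply_natAdd]
        rfl
      cases j with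
      | true =>
        rw [prod_if_split]
        simp only [hL]
        exact a.2
      | false =>
        rw [prod_if_split']
        simp only [hR]
        exact b.2
  · rintro ⟨h1, h2⟩
    have hpt : ∀ i, bl k l i = true ↔ bl k l (w.right i) = true := fun i => by rw [h1 i]
    have hpf : ∀ i, bl k l i = false ↔ bl k l (w.right i) = false := fun i => by rw [h1 i]
    set σ : Equiv.Perm (Fin k) := (eK k l).symm.permCongr (w.right.subtypePerm (fun i => (hpt i).symm)) with hσ
    set τ : Equiv.Perm (Fin l) := (eL k l).symm.permCongr (w.right.subtypePerm (fun i => (hpf i).symm)) with hτ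
    set A : Wreath (Fin k) G := ⟨fun x => w.left (Fin.castAdd l x), σ⟩ with hA
    set B : Wreath (Fin l) G := ⟨fun x => w.left (Fin.natAdd k x), τ⟩ with hB
    have hAmem : A ∈ GnSubgroup k G H := by
      rw [mem_GnSubgroup]
      have h2t : (∏ i, @ite G (bl k l i = true) (Classical.propDecidable _) (w.left i) 1) ∈ H :=
        h2 true
      rwa [prod_ite_classical, prod_if_split] at h2t
    have hBmem : B ∈ GnSubgroup l G H := by
      rw [mem_GnSubgroup]
      have h2f : (∏ i, @ite G (bl k l i = false) (Classical.propDecidable _) (w.left i) 1) ∈ H :=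
        h2 false
      rwa [prod_ite_classical, prod_if_split'] at h2f
    refine ⟨(⟨A, hAmem⟩, ⟨B, hBmem⟩), ?_⟩
    show blockDiagFun A B = w
    apply SemidirectProduct.ext
    · funext i
      show Sum.elim A.left B.left (finSumFinEquiv.symm i) = w.left i
      rcases h : finSumFinEquiv.symm i with x | x
      · have hi : i = Fin.castAdd l x := by
          have := congrArg finSumFinEquiv h; simpa using this
        rw [hi]; rfl
      · have hi : i = Fin.natAdd k x := by
          have := congrArg finSumFinEquiv h; simpa using this
        rw [hi]; rfl
    · apply Equiv.ext
      intro i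
      show finSumFinEquiv ((Equiv.sumCongr σ τ) (finSumFinEquiv.symm i)) = w.right i
      rcases h : finSumFinEquiv.symm i with x | x
      · have hi : i = Fin.castAdd l x := by
          have := congrArg finSumFinEquiv h; simpa using this
        rw [hi]
        exact Fin.ext rfl
      · have hi : i = Fin.natAdd k x := by
          have := congrArg finSumFinEquiv h; simpa using this
        rw [hi]
        have hk : ¬ ((w.right (Fin.natAdd k x) : Fin (k + l)) : ℕ) < k := by
          have hb := h1 (Fin.natAdd k x)
          rw [bl_natAdd] at hb
          simpa [bl] using hb
        apply Fin.ext
        show k + (((w.right (Fin.natAdd k x) : Fin (k + l)) : ℕ) - k)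
            = ((w.right (Fin.natAdd k x) : Fin (k + l)) : ℕ)
        omega

lemma reduceW_mem_block_iff {n : ℕ} {G : Type} [CommGroup G] (H : Subgroup G)
    (bl : Fin n → Bool) (w : Wreath (Fin n) G) :
    reduceW n G H w ∈ blockSubgroupH (⊥ : Subgroup (G ⧸ H)) bl ↔ w ∈ blockSubgroupH H bl := by
  have hright : (reduceW n G H w).right = w.right := rfl
  have hleft : ∀ i, (reduceW n G H w).left i = QuotientGroup.mk (w.left i) := fun i => rfl
  have key : ∀ j : Bool,
      ((∏ i, @ite (G ⧸ H) (bl i = j) (Classical.propDecidable _)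
          ((reduceW n G H w).left i) 1) ∈ (⊥ : Subgroup (G ⧸ H)))
        ↔ (∏ i, @ite G (bl i = j) (Classical.propDecidable _) (w.left i) 1) ∈ H := by
    intro j
    have heq : (∏ i, @ite (G ⧸ H) (bl i = j) (Classical.propDecidable _)
          ((reduceW n G H w).left i) 1)
        = QuotientGroup.mk' H (∏ i, @ite G (bl i = j) (Classical.propDecidable _) (w.left i) 1) := by
      rw [map_prod]
      refine Finset.prod_congr rfl fun i _ => ?_
      rw [hleft, apply_ite (QuotientGroup.mk' H)]
      simp
    rw [heq, Subgroup.mem_bot, QuotientGroup.mk'_apply, QuotientGroup.eq_one_iff]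
  constructor
  · rintro ⟨h1, h2⟩
    exact ⟨fun i => by rw [← hright]; exact h1 i, fun j => (key j).mp (h2 j)⟩
  · rintro ⟨h1, h2⟩
    exact ⟨fun i => by rw [hright]; exact h1 i, fun j => (key j).mpr (h2 j)⟩

lemma phiGn_surjective (n : ℕ) (G : Type) [CommGroup G] (H : Subgroup G) :
    Function.Surjective (phiGn n G H) := by
  intro v
  choose g hg using fun i => QuotientGroup.mk_surjective (s := H) (v.1.left i)
  have hv : QuotientGroup.mk' H (∏ i, g i) = 1 := by
    rw [map_prod]
    have heq : (∏ i, QuotientGroup.mk' H (g i)) = ∏ i, v.1.left i :=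
      Finset.prod_congr rfl fun i _ => hg i
    rw [heq]
    have hm := v.2
    rwa [mem_GnSubgroup, Subgroup.mem_bot] at hm
  have hmem : (⟨g, v.1.right⟩ : Wreath (Fin n) G) ∈ GnSubgroup n G H := by
    rw [mem_GnSubgroup]
    rw [QuotientGroup.mk'_apply, QuotientGroup.eq_one_iff] at hv
    exact hv
  refine ⟨⟨⟨g, v.1.right⟩, hmem⟩, ?_⟩
  apply Subtype.ext
  apply SemidirectProduct.ext
  · funext i
    exact hg i
  · rfl

end S7Aux


/-- reduction mod `H` induces a bijection of coset spaces
`G_{k+l}(G,H)/(G_k(G,H) × G_l(G,H)) ≃ G_{k+l}(G/H,1)/(G_k(G/H,1) × G_l(G/H,1))`. -/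
theorem statement7 (k l : ℕ) (G : Type) [CommGroup G] [Finite G] (H : Subgroup G) :
    ∃ e : (↥(GnSubgroup (k + l) G H) ⧸
            (blockGnRange k l G H).subgroupOf (GnSubgroup (k + l) G H)) ≃
          (↥(GnSubgroup (k + l) (G ⧸ H) ⊥) ⧸
            (blockGnRange k l (G ⧸ H) ⊥).subgroupOf (GnSubgroup (k + l) (G ⧸ H) ⊥)),
      ∀ w : ↥(GnSubgroup (k + l) G H),
        e (QuotientGroup.mk w) = QuotientGroup.mk (phiGn (k + l) G H w) := by
  classical
  have hkey : ∀ w : ↥(GnSubgroup (k + l) G H),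
      phiGn (k + l) G H w ∈ (blockGnRange k l (G ⧸ H) ⊥).subgroupOf (GnSubgroup (k + l) (G ⧸ H) ⊥)
        ↔ w ∈ (blockGnRange k l G H).subgroupOf (GnSubgroup (k + l) G H) := by
    intro w
    rw [Subgroup.mem_subgroupOf, Subgroup.mem_subgroupOf,
      S7Aux.blockGnRange_eq, S7Aux.blockGnRange_eq]
    exact S7Aux.reduceW_mem_block_iff H (S7Aux.bl k l) w.1
  have hcomp : ∀ a b : ↥(GnSubgroup (k + l) G H),
      (phiGn (k + l) G H a)⁻¹ * phiGn (k + l) G H b = phiGn (k + l) G H (a⁻¹ * b) := by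
    intro a b; rw [map_mul, map_inv]
  let f : (↥(GnSubgroup (k + l) G H) ⧸
            (blockGnRange k l G H).subgroupOf (GnSubgroup (k + l) G H)) →
          (↥(GnSubgroup (k + l) (G ⧸ H) ⊥) ⧸
            (blockGnRange k l (G ⧸ H) ⊥).subgroupOf (GnSubgroup (k + l) (G ⧸ H) ⊥)) :=
    Quotient.map' (phiGn (k + l) G H) (by
      intro a b hab
      rw [QuotientGroup.leftRel_apply] at hab ⊢
      rw [hcomp]
      exact (hkey _).mpr hab)
  have hf : ∀ w : ↥(GnSubgroup (k + l) G H),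
      f (QuotientGroup.mk w) = QuotientGroup.mk (phiGn (k + l) G H w) :=
    fun w => Quotient.map'_mk'' _ _ w
  have hinj : Function.Injective f := by
    intro x y
    refine Quotient.inductionOn₂' x y fun a b h => ?_
    have h1 : (QuotientGroup.mk (phiGn (k + l) G H a) :
        ↥(GnSubgroup (k + l) (G ⧸ H) ⊥) ⧸
          (blockGnRange k l (G ⧸ H) ⊥).subgroupOf (GnSubgroup (k + l) (G ⧸ H) ⊥))
        = QuotientGroup.mk (phiGn (k + l) G H b) := by
      rw [← hf a, ← hf b]; exact h
    rw [QuotientGroup.eq, hcomp] at h1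
    have h2 := (hkey _).mp h1
    exact (QuotientGroup.eq.mpr h2 : (QuotientGroup.mk a : _) = QuotientGroup.mk b)
  have hsurj : Function.Surjective f := by
    intro v
    refine Quotient.inductionOn' v fun u => ?_
    obtain ⟨w, hw⟩ := S7Aux.phiGn_surjective (k + l) G H u
    exact ⟨QuotientGroup.mk w, by rw [hf w, hw]⟩
  exact ⟨Equiv.ofBijective f ⟨hinj, hsurj⟩, fun w => hf w⟩
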